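/- arXiv:1007.3110 — 2 statements merged into one kernel-verified Lean document; each statement's English description precedes it below -/
import Mathlib

section
/- Let A be an Arens regular Banach algebra such that every derivation from A** into A* is weak*-to-weak* continuous. If A is weakly amenable, then every continuous derivation from A** into A* is inner. -/
open ContinuousLinearMap NormedSpace

namespace NormedSpace

/-- The topological dual of a seminormed space `E` (removed from Mathlib, restored with its old definition). -/
abbrev Dual (𝕜 : Type*) [NontriviallyNormedField 𝕜] (E : Type*) [SeminormedAddCommGroup E]
    [NormedSpace 𝕜 E] : Type _ :=
  E →L[𝕜] 𝕜

end NormedSpace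

noncomputable section

section Defs

variable {X Y Z W : Type} [NormedAddCommGroup X] [NormedSpace ℝ X]
  [NormedAddCommGroup Y] [NormedSpace ℝ Y] [NormedAddCommGroup Z] [NormedSpace ℝ Z]
  [NormedAddCommGroup W] [NormedSpace ℝ W]

/-- The first adjoint `m^*` of a bounded bilinear map `m : X × Y → Z`,
as a map `Z^* × X → Y^*`, `⟨m^*(z',x), y⟩ = ⟨z', m(x,y)⟩`. -/
def adj1 (m : X →L[ℝ] Y →L[ℝ] Z) :
    Dual ℝ Z →L[ℝ] X →L[ℝ] Dual ℝ Y :=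
  (((ContinuousLinearMap.compL ℝ X (Y →L[ℝ] Z) (Dual ℝ Y)).flip m).comp
    (ContinuousLinearMap.compL ℝ Y Z ℝ))

@[simp] lemma adj1_apply (m : X →L[ℝ] Y →L[ℝ] Z) (z' : Dual ℝ Z) (x : X) (y : Y) :
    adj1 m z' x y = z' (m x y) := rfl

/-- The first (left) Arens extension `m^{***} : X^{**} × Y^{**} → Z^{**}` of a
bounded bilinear map `m : X × Y → Z`. -/
def arens (m : X →L[ℝ] Y →L[ℝ] Z) :
    Dual ℝ (Dual ℝ X) →L[ℝ] Dual ℝ (Dual ℝ Y) →L[ℝ] Dual ℝ (Dual ℝ Z) :=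
  adj1 (adj1 (adj1 m))

/-- The adjoint (dual map) of a bounded linear map. -/
def dualMap' (D : X →L[ℝ] Y) : Dual ℝ Y →L[ℝ] Dual ℝ X :=
  (ContinuousLinearMap.compL ℝ X Y ℝ).flip D

@[simp] lemma dualMap'_apply (D : X →L[ℝ] Y) (g : Dual ℝ Y) (x : X) :
    dualMap' D g x = g (D x) := rfl

/-- The second adjoint `D'' : X^{**} → Y^{**}` of a bounded linear map. -/
def bidualMap (D : X →L[ℝ] Y) : Dual ℝ (Dual ℝ X) →L[ℝ] Dual ℝ (Dual ℝ Y) :=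
  dualMap' (dualMap' D)

/-- Given an action `t : A × X → X`, the transposed action on the dual `X^*`:
`(dualAct t) a f = f ∘ (t a)`. -/
def dualAct (t : W →L[ℝ] X →L[ℝ] X) : W →L[ℝ] Dual ℝ X →L[ℝ] Dual ℝ X :=
  ((ContinuousLinearMap.compL ℝ X X ℝ).flip).comp t

@[simp] lemma dualAct_apply (t : W →L[ℝ] X →L[ℝ] X) (a : W) (f : Dual ℝ X) (x : X) :
    dualAct t a f x = f (t a x) := rfl

/-- `D : A → X` is a derivation with respect to the multiplication `mul'` on `A`
and the left action `l` and right action `r` (`r a x` means `x · a`) of `A` on `X`. -/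
def IsDer {A' : Type} [NormedAddCommGroup A'] [NormedSpace ℝ A']
    (mul' : A' →L[ℝ] A' →L[ℝ] A') (l r : A' →L[ℝ] X →L[ℝ] X) (D : A' →L[ℝ] X) : Prop :=
  ∀ a b : A', D (mul' a b) = l a (D b) + r b (D a)

/-- `D : A → X` is an inner derivation: `D a = a·x - x·a` for some `x`. -/
def IsInner {A' : Type} [NormedAddCommGroup A'] [NormedSpace ℝ A']
    (l r : A' →L[ℝ] X →L[ℝ] X) (D : A' →L[ℝ] X) : Prop :=
  ∃ x : X, ∀ a : A', D a = l a x - r a x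

/-- The bimodule axioms for actions `l`, `r` of an algebra with multiplication `mul'`. -/
def IsBimod {A' : Type} [NormedAddCommGroup A'] [NormedSpace ℝ A']
    (mul' : A' →L[ℝ] A' →L[ℝ] A') (l r : A' →L[ℝ] X →L[ℝ] X) : Prop :=
  (∀ a b x, l (mul' a b) x = l a (l b x)) ∧
  (∀ a b x, r (mul' a b) x = r b (r a x)) ∧
  (∀ a b x, l a (r b x) = r b (l a x))

/-- weak*-to-weak* continuity of a map between dual spaces. -/
def WStarCont (f : Dual ℝ X → Dual ℝ Y) : Prop :=
  ∀ y : Y, Continuous fun φ : WeakDual ℝ X => f φ y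

end Defs

/-- A packaged Banach `A`-bimodule (used to form iterated duals). -/
structure ModPk (A : Type) [NormedAddCommGroup A] [NormedSpace ℝ A] : Type 1 where
  X : Type
  [grp : NormedAddCommGroup X]
  [mod : NormedSpace ℝ X]
  l : A →L[ℝ] X →L[ℝ] X
  r : A →L[ℝ] X →L[ℝ] X

attribute [instance] ModPk.grp ModPk.mod

variable {A : Type} [NormedAddCommGroup A] [NormedSpace ℝ A]

/-- The canonical dual of a packaged bimodule. -/
def ModPk.dual (P : ModPk A) : ModPk A :=
  ⟨Dual ℝ P.X, dualAct P.r, dualAct P.l⟩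

/-- The `n`-th iterated dual of a packaged bimodule. -/
def ModPk.iter (P : ModPk A) : ℕ → ModPk A
  | 0 => P
  | n+1 => (P.iter n).dual

/-- A "level": an algebra (given by its bilinear multiplication) together with a bimodule. -/
structure Lvl : Type 1 where
  Alg : Type
  [g1 : NormedAddCommGroup Alg]
  [m1 : NormedSpace ℝ Alg]
  Mod : Type
  [g2 : NormedAddCommGroup Mod]
  [m2 : NormedSpace ℝ Mod]
  mul : Alg →L[ℝ] Alg →L[ℝ] Alg
  l : Alg →L[ℝ] Mod →L[ℝ] Mod
  r : Alg →L[ℝ] Mod →L[ℝ] Mod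

attribute [instance] Lvl.g1 Lvl.m1 Lvl.g2 Lvl.m2

/-- Passing to second duals: `A^{**}` with the first Arens product, acting on `B^{**}`
via the Arens extensions `π_ℓ^{***}` and `π_r^{***}` of the module actions. -/
def Lvl.double (Q : Lvl) : Lvl where
  Alg := Dual ℝ (Dual ℝ Q.Alg)
  Mod := Dual ℝ (Dual ℝ Q.Mod)
  mul := arens Q.mul
  l := arens Q.l
  r := (arens Q.r.flip).flip

/-- Iterated even duals: `Lvl.iter Q n` is the level `(A^{(2n)}, B^{(2n)})`. -/
def Lvl.iter (Q : Lvl) : ℕ → Lvl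
  | 0 => Q
  | n+1 => (Q.iter n).double

/-- The canonical embedding `A → A^{(2n)}`. -/
def Lvl.embA (Q : Lvl) : (n : ℕ) → Q.Alg →L[ℝ] (Q.iter n).Alg
  | 0 => ContinuousLinearMap.id ℝ _
  | n+1 => (inclusionInDoubleDual ℝ ((Q.iter n).Alg)).comp (Q.embA n)

/-- The canonical embedding `B → B^{(2n)}`. -/
def Lvl.embM (Q : Lvl) : (n : ℕ) → Q.Mod →L[ℝ] (Q.iter n).Mod
  | 0 => ContinuousLinearMap.id ℝ _
  | n+1 => (inclusionInDoubleDual ℝ ((Q.iter n).Mod)).comp (Q.embM n)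

/-- The left-topological-center condition `Z^ℓ_{A^{(2n+2)}}(B^{(2n+2)}) = B^{(2n+2)}`,
stated at the double of a level `Q`: for each `b` in the second-dual module, the map
`a ↦ b·a` is weak*-to-weak* continuous. -/
def Lvl.doubleZl (Q : Lvl) : Prop :=
  ∀ b : (Q.double).Mod, WStarCont (X := Dual ℝ Q.Alg) (Y := Dual ℝ Q.Mod)
    (fun a => (Q.double).r a b)

/-- The base level of a Banach algebra `A` with a Banach `A`-bimodule `B`. -/
def lvlOf (A : Type) [NormedRing A] [NormedAlgebra ℝ A]
    (B : Type) [NormedAddCommGroup B] [NormedSpace ℝ B]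
    (l r : A →L[ℝ] B →L[ℝ] B) : Lvl :=
  Lvl.mk A B (ContinuousLinearMap.mul ℝ A) l r
section AuxWeakDual

open Topology in
lemma weakDual_functional {X : Type} [NormedAddCommGroup X] [NormedSpace ℝ X]
    (f : WeakDual ℝ X →ₗ[ℝ] ℝ) (hf : Continuous f) :
    ∃ x : X, ∀ F : Dual ℝ X, f F = F x := by
  obtain ⟨x, hx⟩ := LinearMap.dualEmbedding_surjective (topDualPairing ℝ X)
    (⟨f, hf⟩ : StrongDual ℝ (WeakBilin (topDualPairing ℝ X)))
  exact ⟨x, fun F => (DFunLike.congr_fun hx F).symm⟩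

end AuxWeakDual

section AuxArens

variable {X' : Type} [NormedAddCommGroup X'] [NormedSpace ℝ X'] (m : X' →L[ℝ] X' →L[ℝ] X')

lemma arens_apply' (F G : Dual ℝ (Dual ℝ X')) (f : Dual ℝ X') :
    arens m F G f = F (adj1 (adj1 m) G f) := rfl

lemma hadj3 (hm : ∀ a b c, m (m a b) c = m a (m b c)) (f : Dual ℝ X') (a b : X') :
    adj1 m (adj1 m f a) b = adj1 m f (m a b) := by
  ext c; simp [hm]

lemma hadj2 (hm : ∀ a b c, m (m a b) c = m a (m b c)) (H : Dual ℝ (Dual ℝ X'))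
    (f : Dual ℝ X') (a : X') :
    adj1 (adj1 m) H (adj1 m f a) = adj1 m (adj1 (adj1 m) H f) a := by
  ext b; simp [hadj3 m hm]

lemma hadj1 (hm : ∀ a b c, m (m a b) c = m a (m b c)) (G H : Dual ℝ (Dual ℝ X'))
    (f : Dual ℝ X') :
    adj1 (adj1 m) (arens m G H) f = adj1 (adj1 m) G (adj1 (adj1 m) H f) := by
  ext a
  show (arens m G H) (adj1 m f a) = _
  rw [arens_apply', hadj2 m hm]
  rfl

lemma arens_assoc (hm : ∀ a b c, m (m a b) c = m a (m b c))
    (F G H : Dual ℝ (Dual ℝ X')) :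
    arens m (arens m F G) H = arens m F (arens m G H) := by
  ext f
  rw [arens_apply', arens_apply', arens_apply', hadj1 m hm]

lemma arens_emb (a b : X') :
    arens m (inclusionInDoubleDual ℝ X' a) (inclusionInDoubleDual ℝ X' b)
      = inclusionInDoubleDual ℝ X' (m a b) := by
  ext f; rfl

lemma adj2_emb (b : X') (g : Dual ℝ X') :
    adj1 (adj1 m) (inclusionInDoubleDual ℝ X' b) g = dualAct m.flip b g := by
  ext c; rfl

lemma act_left (F : Dual ℝ (Dual ℝ X')) (g : Dual ℝ X') :
    dualAct (W := Dual ℝ (Dual ℝ X')) (X := Dual ℝ (Dual ℝ X')) ((arens m).flip) F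
      (inclusionInDoubleDual ℝ (Dual ℝ X') g)
      = inclusionInDoubleDual ℝ (Dual ℝ X') (adj1 (adj1 m) F g) := by
  ext G; rfl

lemma act_right (hreg : ∀ F G, arens m F G = arens m.flip G F)
    (F : Dual ℝ (Dual ℝ X')) (g : Dual ℝ X') :
    dualAct (W := Dual ℝ (Dual ℝ X')) (X := Dual ℝ (Dual ℝ X')) (arens m) F
      (inclusionInDoubleDual ℝ (Dual ℝ X') g)
      = inclusionInDoubleDual ℝ (Dual ℝ X') (adj1 (adj1 m.flip) F g) := by
  ext G
  exact congrArg (fun t => t g) (hreg F G)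

lemma bimod_ll (hm : ∀ a b c, m (m a b) c = m a (m b c))
    (F G : Dual ℝ (Dual ℝ X')) (φ : Dual ℝ (Dual ℝ (Dual ℝ X'))) :
    dualAct (W := Dual ℝ (Dual ℝ X')) (X := Dual ℝ (Dual ℝ X')) ((arens m).flip)
        (arens m F G) φ
      = dualAct (W := Dual ℝ (Dual ℝ X')) (X := Dual ℝ (Dual ℝ X')) ((arens m).flip) F
        (dualAct (W := Dual ℝ (Dual ℝ X')) (X := Dual ℝ (Dual ℝ X')) ((arens m).flip) G φ) := by
  ext H
  simp only [dualAct_apply, ContinuousLinearMap.flip_apply]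
  exact congrArg φ (arens_assoc m hm H F G).symm

lemma bimod_rr (hm : ∀ a b c, m (m a b) c = m a (m b c))
    (F G : Dual ℝ (Dual ℝ X')) (φ : Dual ℝ (Dual ℝ (Dual ℝ X'))) :
    dualAct (W := Dual ℝ (Dual ℝ X')) (X := Dual ℝ (Dual ℝ X')) (arens m) (arens m F G) φ
      = dualAct (W := Dual ℝ (Dual ℝ X')) (X := Dual ℝ (Dual ℝ X')) (arens m) G
        (dualAct (W := Dual ℝ (Dual ℝ X')) (X := Dual ℝ (Dual ℝ X')) (arens m) F φ) := by
  ext H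
  simp only [dualAct_apply]
  exact congrArg φ (arens_assoc m hm F G H)

lemma bimod_lr (hm : ∀ a b c, m (m a b) c = m a (m b c))
    (F G : Dual ℝ (Dual ℝ X')) (φ : Dual ℝ (Dual ℝ (Dual ℝ X'))) :
    dualAct (W := Dual ℝ (Dual ℝ X')) (X := Dual ℝ (Dual ℝ X')) ((arens m).flip) F
        (dualAct (W := Dual ℝ (Dual ℝ X')) (X := Dual ℝ (Dual ℝ X')) (arens m) G φ)
      = dualAct (W := Dual ℝ (Dual ℝ X')) (X := Dual ℝ (Dual ℝ X')) (arens m) G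
        (dualAct (W := Dual ℝ (Dual ℝ X')) (X := Dual ℝ (Dual ℝ X')) ((arens m).flip) F φ) := by
  ext H
  simp only [dualAct_apply, ContinuousLinearMap.flip_apply]
  exact congrArg φ (arens_assoc m hm G H F).symm

end AuxArens


set_option maxHeartbeats 2000000 in
/-- **Corollary 2-18.** Let `A` be an Arens regular Banach algebra such that every
derivation `A** → A*` is weak*-to-weak* continuous. If `A` is weakly amenable, then
every continuous derivation `A** → A*` is inner (identities read in `A***` via the
canonical embedding `A* → A***`). -/
theorem stmt13 (A : Type) [NormedRing A] [NormedAlgebra ℝ A] [CompleteSpace A]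
    -- `A` is Arens regular
    (hreg : ∀ F G, arens (ContinuousLinearMap.mul ℝ A) F G =
      arens (ContinuousLinearMap.mul ℝ A).flip G F)
    -- every derivation `A** → A*` is weak*-to-weak* continuous
    (hwcont : ∀ D : Dual ℝ (Dual ℝ A) →L[ℝ] Dual ℝ A,
      (∀ F G : Dual ℝ (Dual ℝ A),
        inclusionInDoubleDual ℝ (Dual ℝ A) (D (arens (ContinuousLinearMap.mul ℝ A) F G)) =
          dualAct (W := Dual ℝ (Dual ℝ A)) (X := Dual ℝ (Dual ℝ A))
            ((arens (ContinuousLinearMap.mul ℝ A).flip.flip).flip) F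
            (inclusionInDoubleDual ℝ (Dual ℝ A) (D G)) +
          dualAct (W := Dual ℝ (Dual ℝ A)) (X := Dual ℝ (Dual ℝ A))
            (arens (ContinuousLinearMap.mul ℝ A)) G
            (inclusionInDoubleDual ℝ (Dual ℝ A) (D F))) →
      ∀ a : A, Continuous fun F : WeakDual ℝ (Dual ℝ A) => D F a)
    -- `A` is weakly amenable
    (hwa : ∀ D : A →L[ℝ] Dual ℝ A,
      IsDer (ContinuousLinearMap.mul ℝ A)
        (dualAct (ContinuousLinearMap.mul ℝ A).flip) (dualAct (ContinuousLinearMap.mul ℝ A)) D →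
      IsInner (dualAct (ContinuousLinearMap.mul ℝ A).flip) (dualAct (ContinuousLinearMap.mul ℝ A)) D) :
    -- `H¹(A**, A*) = 0`
    ∀ D : Dual ℝ (Dual ℝ A) →L[ℝ] Dual ℝ A,
      (∀ F G : Dual ℝ (Dual ℝ A),
        inclusionInDoubleDual ℝ (Dual ℝ A) (D (arens (ContinuousLinearMap.mul ℝ A) F G)) =
          dualAct (W := Dual ℝ (Dual ℝ A)) (X := Dual ℝ (Dual ℝ A))
            ((arens (ContinuousLinearMap.mul ℝ A).flip.flip).flip) F
            (inclusionInDoubleDual ℝ (Dual ℝ A) (D G)) +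
          dualAct (W := Dual ℝ (Dual ℝ A)) (X := Dual ℝ (Dual ℝ A))
            (arens (ContinuousLinearMap.mul ℝ A)) G
            (inclusionInDoubleDual ℝ (Dual ℝ A) (D F))) →
      ∃ a' : Dual ℝ A, ∀ F : Dual ℝ (Dual ℝ A),
        inclusionInDoubleDual ℝ (Dual ℝ A) (D F) =
          dualAct (W := Dual ℝ (Dual ℝ A)) (X := Dual ℝ (Dual ℝ A))
            ((arens (ContinuousLinearMap.mul ℝ A).flip.flip).flip) F
            (inclusionInDoubleDual ℝ (Dual ℝ A) a') -
          dualAct (W := Dual ℝ (Dual ℝ A)) (X := Dual ℝ (Dual ℝ A))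
            (arens (ContinuousLinearMap.mul ℝ A)) F
            (inclusionInDoubleDual ℝ (Dual ℝ A) a') := by
  intro D hD
  have hassoc : ∀ a b c : A, (ContinuousLinearMap.mul ℝ A) ((ContinuousLinearMap.mul ℝ A) a b) c
      = (ContinuousLinearMap.mul ℝ A) a ((ContinuousLinearMap.mul ℝ A) b c) := by
    intro a b c; simp [mul_assoc]
  simp only [ContinuousLinearMap.flip_flip] at hD ⊢
  have hinj : Function.Injective (inclusionInDoubleDual ℝ (Dual ℝ A)) := by
    intro x y h
    exact (eq_iff_forall_dual_eq ℝ).mpr fun g => congrArg (fun t => t g) h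
  -- Step A : the restriction of `D` to `A` is a derivation `A → A*`
  have hd : IsDer (ContinuousLinearMap.mul ℝ A)
      (dualAct (ContinuousLinearMap.mul ℝ A).flip) (dualAct (ContinuousLinearMap.mul ℝ A))
      (D.comp (inclusionInDoubleDual ℝ A)) := by
    intro a b
    apply hinj
    have h := hD (inclusionInDoubleDual ℝ A a) (inclusionInDoubleDual ℝ A b)
    rw [arens_emb, act_left, act_right _ hreg, adj2_emb, adj2_emb,
      ContinuousLinearMap.flip_flip] at h
    rw [map_add]
    exact h
  -- Step B : weak amenability makes it inner, implemented by `f : A*`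
  obtain ⟨f, hf⟩ := hwa _ hd
  -- Step C : the corresponding "inner" map `E : A** → A*`
  set E : Dual ℝ (Dual ℝ A) →L[ℝ] Dual ℝ A :=
    (adj1 (adj1 (ContinuousLinearMap.mul ℝ A))).flip f -
      (adj1 (adj1 (ContinuousLinearMap.mul ℝ A).flip)).flip f with hEdef
  have hEapp : ∀ F, E F = adj1 (adj1 (ContinuousLinearMap.mul ℝ A)) F f -
      adj1 (adj1 (ContinuousLinearMap.mul ℝ A).flip) F f := fun F => rfl
  have hE : ∀ F, inclusionInDoubleDual ℝ (Dual ℝ A) (E F) =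
      dualAct (W := Dual ℝ (Dual ℝ A)) (X := Dual ℝ (Dual ℝ A))
        ((arens (ContinuousLinearMap.mul ℝ A)).flip) F
        (inclusionInDoubleDual ℝ (Dual ℝ A) f) -
      dualAct (W := Dual ℝ (Dual ℝ A)) (X := Dual ℝ (Dual ℝ A))
        (arens (ContinuousLinearMap.mul ℝ A)) F
        (inclusionInDoubleDual ℝ (Dual ℝ A) f) := by
    intro F
    rw [hEapp, map_sub, act_left, act_right _ hreg]
  -- Step D : `E` is a derivation, hence so is `D - E`
  have hEder : ∀ F G, inclusionInDoubleDual ℝ (Dual ℝ A)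
        (E (arens (ContinuousLinearMap.mul ℝ A) F G)) =
      dualAct (W := Dual ℝ (Dual ℝ A)) (X := Dual ℝ (Dual ℝ A))
        ((arens (ContinuousLinearMap.mul ℝ A)).flip) F
        (inclusionInDoubleDual ℝ (Dual ℝ A) (E G)) +
      dualAct (W := Dual ℝ (Dual ℝ A)) (X := Dual ℝ (Dual ℝ A))
        (arens (ContinuousLinearMap.mul ℝ A)) G
        (inclusionInDoubleDual ℝ (Dual ℝ A) (E F)) := by
    intro F G
    rw [hE, hE, hE, map_sub, map_sub]
    rw [← bimod_ll _ hassoc, ← bimod_rr _ hassoc, bimod_lr _ hassoc]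
    abel
  have hD2der : ∀ F G, inclusionInDoubleDual ℝ (Dual ℝ A)
        ((D - E) (arens (ContinuousLinearMap.mul ℝ A) F G)) =
      dualAct (W := Dual ℝ (Dual ℝ A)) (X := Dual ℝ (Dual ℝ A))
        ((arens (ContinuousLinearMap.mul ℝ A)).flip) F
        (inclusionInDoubleDual ℝ (Dual ℝ A) ((D - E) G)) +
      dualAct (W := Dual ℝ (Dual ℝ A)) (X := Dual ℝ (Dual ℝ A))
        (arens (ContinuousLinearMap.mul ℝ A)) G
        (inclusionInDoubleDual ℝ (Dual ℝ A) ((D - E) F)) := by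
    intro F G
    simp only [ContinuousLinearMap.sub_apply, map_sub]
    rw [hD F G, hEder F G]
    abel
  -- Step E : `D - E` vanishes on the image of `A`
  have hzero : ∀ b : A, (D - E) (inclusionInDoubleDual ℝ A b) = 0 := by
    intro b
    have hEb : E (inclusionInDoubleDual ℝ A b) =
        dualAct (ContinuousLinearMap.mul ℝ A).flip b f -
          dualAct (ContinuousLinearMap.mul ℝ A) b f := by
      rw [hEapp, adj2_emb, adj2_emb, ContinuousLinearMap.flip_flip]
    have hdb : D (inclusionInDoubleDual ℝ A b) =
        dualAct (ContinuousLinearMap.mul ℝ A).flip b f -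
          dualAct (ContinuousLinearMap.mul ℝ A) b f := hf b
    rw [ContinuousLinearMap.sub_apply, hEb, hdb, sub_self]
  -- Step F : weak* continuity forces `D - E = 0`
  have hcont := hwcont (D - E) (by
    intro F G
    simp only [ContinuousLinearMap.flip_flip]
    exact hD2der F G)
  have key : ∀ (a : A) (F : Dual ℝ (Dual ℝ A)), (D - E) F a = 0 := by
    intro a
    let flin : WeakDual ℝ (Dual ℝ A) →ₗ[ℝ] ℝ :=
      { toFun := fun F => (D - E) F a
        map_add' := fun F G => by
          show ((D - E) (F + G)) a = _
          exact congrArg (fun t => t a) (map_add (D - E) (F : Dual ℝ (Dual ℝ A)) G)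
        map_smul' := fun c F => by
          show ((D - E) (c • F)) a = _
          exact congrArg (fun t => t a) (map_smul (D - E) c (F : Dual ℝ (Dual ℝ A))) }
    obtain ⟨x, hx⟩ := weakDual_functional flin (hcont a)
    have hx0 : x = 0 := by
      ext b
      have h1 := hx (inclusionInDoubleDual ℝ A b)
      have h2 : (D - E) (inclusionInDoubleDual ℝ A b) a = 0 := by rw [hzero b]; rfl
      have : (0 : ℝ) = x b := by
        rw [← h2]
        exact h1
      simpa using this.symm
    intro F
    have := hx F
    rw [hx0] at this
    exact this.trans (map_zero F)
  -- Step G : conclude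
  refine ⟨f, fun F => ?_⟩
  have hDF : D F = E F := by
    ext a
    have h := key a F
    rw [ContinuousLinearMap.sub_apply, ContinuousLinearMap.sub_apply] at h
    linarith [h]
  rw [hDF, hE F]
end
end

section
/- Let A be a Banach algebra with a bounded left approximate identity such that A·B** ⊆ B and B**·A ⊆ B for a Banach A-bimodule B, and suppose every derivation from A** into B*** is weak*-to-weak* continuous. If every continuous derivation from A into B* is inner, then every continuous derivation from A** into B*** is inner. -/
open ContinuousLinearMap NormedSpace

noncomputable section

variable {A : Type} [NormedAddCommGroup A] [NormedSpace ℝ A]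

section AuxProof

open Filter

lemma arens_apply'_s14 {X Y Z : Type} [NormedAddCommGroup X] [NormedSpace ℝ X]
    [NormedAddCommGroup Y] [NormedSpace ℝ Y] [NormedAddCommGroup Z] [NormedSpace ℝ Z]
    (m : X →L[ℝ] Y →L[ℝ] Z) (F : Dual ℝ (Dual ℝ X)) (G : Dual ℝ (Dual ℝ Y)) (ζ : Dual ℝ Z) :
    arens m F G ζ = F (adj1 (adj1 m) G ζ) := rfl

/-- The Arens extension restricted to the canonical images is the original map. -/
lemma arens_incl_incl {X Y Z : Type} [NormedAddCommGroup X] [NormedSpace ℝ X]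
    [NormedAddCommGroup Y] [NormedSpace ℝ Y] [NormedAddCommGroup Z] [NormedSpace ℝ Z]
    (m : X →L[ℝ] Y →L[ℝ] Z) (x : X) (y : Y) :
    arens m (inclusionInDoubleDual ℝ X x) (inclusionInDoubleDual ℝ Y y)
      = inclusionInDoubleDual ℝ Z (m x y) := by
  ext ζ
  simp [arens_apply'_s14, NormedSpace.dual_def]

/-- Arens extension of a "left-action composition" identity. -/
lemma arens_comp_left {A B : Type} [NormedAddCommGroup A] [NormedSpace ℝ A]
    [NormedAddCommGroup B] [NormedSpace ℝ B]
    (m : A →L[ℝ] A →L[ℝ] A) (l : A →L[ℝ] B →L[ℝ] B)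
    (h : ∀ (a b : A) (x : B), l (m a b) x = l a (l b x))
    (F G : Dual ℝ (Dual ℝ A)) (H : Dual ℝ (Dual ℝ B)) :
    arens l (arens m F G) H = arens l F (arens l G H) := by
  have s1 : ∀ (β : Dual ℝ B) (a a' : A),
      adj1 l β (m a a') = adj1 l (adj1 l β a) a' := by
    intro β a a'
    ext b
    simp only [adj1_apply]
    rw [h a a' b]
  have s2 : ∀ (β : Dual ℝ B) (a : A),
      adj1 m (adj1 (adj1 l) H β) a = adj1 (adj1 l) H (adj1 l β a) := by
    intro β a
    ext a'
    simp only [adj1_apply]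
    rw [s1]
  have s3 : ∀ β : Dual ℝ B,
      adj1 (adj1 m) G (adj1 (adj1 l) H β) = adj1 (adj1 l) (arens l G H) β := by
    intro β
    ext a
    simp only [adj1_apply, arens_apply'_s14]
    rw [s2]
  ext β
  simp only [arens_apply'_s14]
  rw [s3]

/-- Arens extension of a "right-action composition" identity. -/
lemma arens_comp_right {A B : Type} [NormedAddCommGroup A] [NormedSpace ℝ A]
    [NormedAddCommGroup B] [NormedSpace ℝ B]
    (m : A →L[ℝ] A →L[ℝ] A) (r : A →L[ℝ] B →L[ℝ] B)
    (h : ∀ (a b : A) (x : B), r (m a b) x = r b (r a x))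
    (F G : Dual ℝ (Dual ℝ A)) (H : Dual ℝ (Dual ℝ B)) :
    arens r.flip H (arens m F G) = arens r.flip (arens r.flip H F) G := by
  have s1 : ∀ (β : Dual ℝ B) (b : B) (a : A),
      adj1 m (adj1 r.flip β b) a = adj1 r.flip β (r a b) := by
    intro β b a
    ext a'
    simp only [adj1_apply, ContinuousLinearMap.flip_apply]
    rw [h a a' b]
  have s2 : ∀ (β : Dual ℝ B) (b : B),
      adj1 (adj1 m) G (adj1 r.flip β b) = adj1 r.flip (adj1 (adj1 r.flip) G β) b := by
    intro β b
    ext a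
    simp only [adj1_apply, ContinuousLinearMap.flip_apply]
    rw [s1]
  have s3 : ∀ β : Dual ℝ B,
      adj1 (adj1 r.flip) (arens m F G) β
        = adj1 (adj1 r.flip) F (adj1 (adj1 r.flip) G β) := by
    intro β
    ext b
    simp only [adj1_apply, arens_apply'_s14]
    rw [s2]
  ext β
  simp only [arens_apply'_s14]
  rw [s3]

/-- Arens extension of the commutation identity between the two actions. -/
lemma arens_comm {A B : Type} [NormedAddCommGroup A] [NormedSpace ℝ A]
    [NormedAddCommGroup B] [NormedSpace ℝ B]
    (l r : A →L[ℝ] B →L[ℝ] B)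
    (h : ∀ (a b : A) (x : B), l a (r b x) = r b (l a x))
    (F G : Dual ℝ (Dual ℝ A)) (H : Dual ℝ (Dual ℝ B)) :
    arens l G (arens r.flip H F) = arens r.flip (arens l G H) F := by
  have s1 : ∀ (β : Dual ℝ B) (a : A) (b : B),
      adj1 r.flip (adj1 l β a) b = adj1 r.flip β (l a b) := by
    intro β a b
    ext a'
    simp only [adj1_apply, ContinuousLinearMap.flip_apply]
    rw [h a a' b]
  have s2 : ∀ (β : Dual ℝ B) (a : A),
      adj1 (adj1 r.flip) F (adj1 l β a) = adj1 l (adj1 (adj1 r.flip) F β) a := by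
    intro β a
    ext b
    simp only [adj1_apply]
    rw [s1]
  have s3 : ∀ β : Dual ℝ B,
      adj1 (adj1 l) (arens r.flip H F) β = adj1 (adj1 l) H (adj1 (adj1 r.flip) F β) := by
    intro β
    ext a
    simp only [adj1_apply, arens_apply'_s14]
    rw [s2]
  ext β
  simp only [arens_apply'_s14]
  rw [s3]

/-- Finite weak*-approximation (exact agreement on finitely many functionals). -/
lemma exists_agree {X : Type} [NormedAddCommGroup X] [NormedSpace ℝ X]
    (F : WeakDual ℝ (Dual ℝ X)) (s : Finset (Dual ℝ X)) :
    ∃ x : X, ∀ g ∈ s, g x = F g := by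
  classical
  set T : X →ₗ[ℝ] (s → ℝ) :=
    { toFun := fun x g => (g : Dual ℝ X) x
      map_add' := by intro x y; ext g; simp
      map_smul' := by intro c x; ext g; simp } with hT
  by_contra hcon
  push_neg at hcon
  have hx : (fun g : s => F (g : Dual ℝ X)) ∉ LinearMap.range T := by
    rintro ⟨x, hxeq⟩
    obtain ⟨g, hgs, hgne⟩ := hcon x
    have := congrFun hxeq (⟨g, hgs⟩ : s)
    exact hgne this
  obtain ⟨φ, hφne, hφbot⟩ := Submodule.exists_dual_map_eq_bot_of_notMem hx inferInstance
  have hφT : ∀ x : X, φ (T x) = 0 := by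
    intro x
    have hmem : φ (T x) ∈ (LinearMap.range T).map φ :=
      Submodule.mem_map_of_mem ⟨x, rfl⟩
    rw [hφbot] at hmem
    simpa using hmem
  have hexp : ∀ v : s → ℝ, φ v = ∑ g : s, v g * φ (Pi.single g 1) := by
    intro v
    conv_lhs => rw [← Finset.univ_sum_single v]
    rw [map_sum]
    refine Finset.sum_congr rfl fun g _ => ?_
    have hsing : Pi.single g (v g) = v g • (Pi.single g 1 : s → ℝ) := by
      rw [← Pi.single_smul, smul_eq_mul, mul_one]
    rw [hsing, map_smul, smul_eq_mul]
  set gg : Dual ℝ X := ∑ g : s, φ (Pi.single g 1) • (g : Dual ℝ X) with hgg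
  have hggzero : gg = 0 := by
    ext x
    have h0 := hφT x
    rw [hexp] at h0
    simpa [hgg, ContinuousLinearMap.sum_apply, hT, mul_comm] using h0
  have hFgg : φ (fun g : s => F (g : Dual ℝ X)) = 0 := by
    rw [hexp]
    have hF0 : F gg = 0 := by rw [hggzero]; exact map_zero F
    rw [hgg] at hF0
    rw [map_sum] at hF0
    simpa [smul_eq_mul, mul_comm] using hF0
  exact hφne hFgg

/-- The canonical map into the weak-star bidual. -/
def toWeakBidual (X : Type) [NormedAddCommGroup X] [NormedSpace ℝ X] :
    X → WeakDual ℝ (Dual ℝ X) :=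
  fun x => inclusionInDoubleDual ℝ X x

/-- Weak*-density of the canonical image of `X` in its bidual (Goldstine-type lemma). -/
lemma denseRange_toWeakBidual (X : Type) [NormedAddCommGroup X] [NormedSpace ℝ X] :
    DenseRange (toWeakBidual X) := by
  classical
  suffices h : ∀ F : WeakDual ℝ (Dual ℝ X), F ∈ closure (Set.range (toWeakBidual X)) from h
  intro F
  choose pt hpt using fun s => exists_agree F s
  have htd : Filter.Tendsto (fun s : Finset (Dual ℝ X) => toWeakBidual X (pt s))
      atTop (nhds F) := by
    refine tendsto_iff_forall_eval_tendsto_topDualPairing.mpr fun g => ?_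
    refine Filter.Tendsto.congr' ?_ tendsto_const_nhds
    filter_upwards [Filter.eventually_ge_atTop ({g} : Finset (Dual ℝ X))] with s hs
    have hmem : g ∈ s := Finset.singleton_subset_iff.mp hs
    simp [toWeakBidual, topDualPairing_apply, NormedSpace.dual_def]
    exact (hpt s g hmem).symm
  exact mem_closure_of_tendsto htd (Filter.Eventually.of_forall fun s => Set.mem_range_self _)

end AuxProof

set_option maxHeartbeats 1000000 in
/-- **Theorem 2-20.** Let `A` be a Banach algebra with a bounded left approximate
identity and `B` a Banach `A`-bimodule with `A·B** ⊆ B` and `B**·A ⊆ B`, such that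
every derivation `A** → B***` is weak*-to-weak* continuous. If every continuous
derivation `A → B*` is inner, then every continuous derivation `A** → B***` is inner. -/
theorem stmt14 (A : Type) [NormedRing A] [NormedAlgebra ℝ A] [CompleteSpace A]
    (B : Type) [NormedAddCommGroup B] [NormedSpace ℝ B] [CompleteSpace B]
    (l r : A →L[ℝ] B →L[ℝ] B)
    (hbim : IsBimod (ContinuousLinearMap.mul ℝ A) l r)
    -- `A` has a bounded left approximate identity
    (hBLAI : ∃ (ι : Type) (F : Filter ι) (e : ι → A), F.NeBot ∧
      (∃ C : ℝ, ∀ i, ‖e i‖ ≤ C) ∧ ∀ a : A, Filter.Tendsto (fun i => e i * a) F (nhds a))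
    -- `A·B** ⊆ B`
    (hl2 : ∀ (a : A) (G : Dual ℝ (Dual ℝ B)), ∃ b : B,
      arens l (inclusionInDoubleDual ℝ A a) G = inclusionInDoubleDual ℝ B b)
    -- `B**·A ⊆ B`
    (hr2 : ∀ (a : A) (G : Dual ℝ (Dual ℝ B)), ∃ b : B,
      (arens r.flip).flip (inclusionInDoubleDual ℝ A a) G = inclusionInDoubleDual ℝ B b)
    -- every derivation `A** → B***` is weak*-to-weak* continuous
    (hwcont : ∀ D : Dual ℝ (Dual ℝ A) →L[ℝ] Dual ℝ (Dual ℝ (Dual ℝ B)),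
      IsDer (arens (ContinuousLinearMap.mul ℝ A))
        (dualAct (W := Dual ℝ (Dual ℝ A)) (X := Dual ℝ (Dual ℝ B)) ((arens r.flip).flip))
        (dualAct (W := Dual ℝ (Dual ℝ A)) (X := Dual ℝ (Dual ℝ B)) (arens l)) D →
      ∀ G : Dual ℝ (Dual ℝ B), Continuous fun F : WeakDual ℝ (Dual ℝ A) => D F G)
    -- `H¹(A, B*) = 0`
    (h1 : ∀ D : A →L[ℝ] Dual ℝ B,
      IsDer (ContinuousLinearMap.mul ℝ A) (dualAct r) (dualAct l) D →
      IsInner (dualAct r) (dualAct l) D) :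
    -- `H¹(A**, B***) = 0`
    ∀ D : Dual ℝ (Dual ℝ A) →L[ℝ] Dual ℝ (Dual ℝ (Dual ℝ B)),
      IsDer (arens (ContinuousLinearMap.mul ℝ A))
        (dualAct (W := Dual ℝ (Dual ℝ A)) (X := Dual ℝ (Dual ℝ B)) ((arens r.flip).flip))
        (dualAct (W := Dual ℝ (Dual ℝ A)) (X := Dual ℝ (Dual ℝ B)) (arens l)) D →
      IsInner
        (dualAct (W := Dual ℝ (Dual ℝ A)) (X := Dual ℝ (Dual ℝ B)) ((arens r.flip).flip))
        (dualAct (W := Dual ℝ (Dual ℝ A)) (X := Dual ℝ (Dual ℝ B)) (arens l)) D := by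
  intro D hD
  classical
  obtain ⟨hb1, hb2, hb3⟩ := hbim
  have hAl := arens_comp_left (ContinuousLinearMap.mul ℝ A) l hb1
  have hAr := arens_comp_right (ContinuousLinearMap.mul ℝ A) r hb2
  have hAc := arens_comm l r hb3
  -- compatibility of the Arens extensions with the canonical embeddings
  have e_r : ∀ (a : A) (bb : B),
      (arens r.flip).flip (inclusionInDoubleDual ℝ A a) (inclusionInDoubleDual ℝ B bb)
        = inclusionInDoubleDual ℝ B (r a bb) := by
    intro a bb
    rw [ContinuousLinearMap.flip_apply, arens_incl_incl, ContinuousLinearMap.flip_apply]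
  have e_l : ∀ (a : A) (bb : B),
      arens l (inclusionInDoubleDual ℝ A a) (inclusionInDoubleDual ℝ B bb)
        = inclusionInDoubleDual ℝ B (l a bb) :=
    fun a bb => arens_incl_incl l a bb
  have e_m : ∀ a b : A, inclusionInDoubleDual ℝ A (a * b)
      = arens (ContinuousLinearMap.mul ℝ A)
          (inclusionInDoubleDual ℝ A a) (inclusionInDoubleDual ℝ A b) := by
    intro a b
    rw [arens_incl_incl, ContinuousLinearMap.mul_apply']
  -- the restricted derivation `d : A → B*`
  set d : A →L[ℝ] Dual ℝ B :=
    (dualMap' (X := B) (Y := Dual ℝ (Dual ℝ B)) (inclusionInDoubleDual ℝ B)).comp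
      (D.comp (inclusionInDoubleDual ℝ A)) with hd_def
  have d_apply : ∀ (a : A) (bb : B),
      d a bb = D (inclusionInDoubleDual ℝ A a) (inclusionInDoubleDual ℝ B bb) :=
    fun a bb => rfl
  have hder_d : IsDer (ContinuousLinearMap.mul ℝ A) (dualAct r) (dualAct l) d := by
    intro a b
    ext bb
    calc d (ContinuousLinearMap.mul ℝ A a b) bb
        = D (inclusionInDoubleDual ℝ A (a * b)) (inclusionInDoubleDual ℝ B bb) := by
          rw [ContinuousLinearMap.mul_apply']
          exact d_apply _ _
      _ = D (arens (ContinuousLinearMap.mul ℝ A) (inclusionInDoubleDual ℝ A a)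
            (inclusionInDoubleDual ℝ A b)) (inclusionInDoubleDual ℝ B bb) := by rw [e_m]
      _ = dualAct (W := Dual ℝ (Dual ℝ A)) (X := Dual ℝ (Dual ℝ B)) ((arens r.flip).flip) (inclusionInDoubleDual ℝ A a)
            (D (inclusionInDoubleDual ℝ A b)) (inclusionInDoubleDual ℝ B bb)
          + dualAct (W := Dual ℝ (Dual ℝ A)) (X := Dual ℝ (Dual ℝ B)) (arens l) (inclusionInDoubleDual ℝ A b)
            (D (inclusionInDoubleDual ℝ A a)) (inclusionInDoubleDual ℝ B bb) := by
          rw [hD (inclusionInDoubleDual ℝ A a) (inclusionInDoubleDual ℝ A b),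
            ContinuousLinearMap.add_apply]
      _ = D (inclusionInDoubleDual ℝ A b) (inclusionInDoubleDual ℝ B (r a bb))
          + D (inclusionInDoubleDual ℝ A a) (inclusionInDoubleDual ℝ B (l b bb)) := by
          rw [dualAct_apply, dualAct_apply, e_r, e_l]
      _ = (dualAct r a (d b) + dualAct l b (d a)) bb := by
          rw [ContinuousLinearMap.add_apply, dualAct_apply, dualAct_apply, d_apply, d_apply]
  obtain ⟨f, hf⟩ := h1 d hder_d
  -- the implementing element and the corrected derivation `D1`
  set x : Dual ℝ (Dual ℝ (Dual ℝ B)) := inclusionInDoubleDual ℝ (Dual ℝ B) f with hx_def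
  set adx : Dual ℝ (Dual ℝ A) →L[ℝ] Dual ℝ (Dual ℝ (Dual ℝ B)) :=
    (dualAct (W := Dual ℝ (Dual ℝ A)) (X := Dual ℝ (Dual ℝ B)) ((arens r.flip).flip)).flip x
      - (dualAct (W := Dual ℝ (Dual ℝ A)) (X := Dual ℝ (Dual ℝ B)) (arens l)).flip x with hadx_def
  set D1 : Dual ℝ (Dual ℝ A) →L[ℝ] Dual ℝ (Dual ℝ (Dual ℝ B)) := D - adx with hD1_def
  have D1_apply : ∀ F, D1 F
      = D F - (dualAct (W := Dual ℝ (Dual ℝ A)) (X := Dual ℝ (Dual ℝ B)) ((arens r.flip).flip) F x - dualAct (W := Dual ℝ (Dual ℝ A)) (X := Dual ℝ (Dual ℝ B)) (arens l) F x) := by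
    intro F
    simp [hD1_def, hadx_def, ContinuousLinearMap.sub_apply, ContinuousLinearMap.flip_apply]
  have hP : ∀ (a : A) (bb : B),
      D1 (inclusionInDoubleDual ℝ A a) (inclusionInDoubleDual ℝ B bb) = 0 := by
    intro a bb
    have h2 : d a bb = f (r a bb) - f (l a bb) := by
      rw [hf a, ContinuousLinearMap.sub_apply, dualAct_apply, dualAct_apply]
    have h3 : D1 (inclusionInDoubleDual ℝ A a) (inclusionInDoubleDual ℝ B bb)
        = D (inclusionInDoubleDual ℝ A a) (inclusionInDoubleDual ℝ B bb)
          - (f (r a bb) - f (l a bb)) := by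
      rw [D1_apply, ContinuousLinearMap.sub_apply, ContinuousLinearMap.sub_apply,
        dualAct_apply, dualAct_apply, e_r, e_l]
      simp [hx_def, NormedSpace.dual_def]
    rw [h3, ← d_apply, h2, sub_self]
  have hQl : ∀ (a : A) (Φ : Dual ℝ (Dual ℝ (Dual ℝ B))),
      (∀ bb : B, Φ (inclusionInDoubleDual ℝ B bb) = 0) →
      dualAct (W := Dual ℝ (Dual ℝ A)) (X := Dual ℝ (Dual ℝ B)) ((arens r.flip).flip) (inclusionInDoubleDual ℝ A a) Φ = 0 := by
    intro a Φ hΦ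
    ext G
    rw [dualAct_apply]
    obtain ⟨b, hb⟩ := hr2 a G
    rw [hb, hΦ b]
    simp
  have hQr : ∀ (a : A) (Φ : Dual ℝ (Dual ℝ (Dual ℝ B))),
      (∀ bb : B, Φ (inclusionInDoubleDual ℝ B bb) = 0) →
      dualAct (W := Dual ℝ (Dual ℝ A)) (X := Dual ℝ (Dual ℝ B)) (arens l) (inclusionInDoubleDual ℝ A a) Φ = 0 := by
    intro a Φ hΦ
    ext G
    rw [dualAct_apply]
    obtain ⟨b, hb⟩ := hl2 a G
    rw [hb, hΦ b]
    simp
  have hD1der : IsDer (arens (ContinuousLinearMap.mul ℝ A))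
      (dualAct (W := Dual ℝ (Dual ℝ A)) (X := Dual ℝ (Dual ℝ B)) ((arens r.flip).flip)) (dualAct (W := Dual ℝ (Dual ℝ A)) (X := Dual ℝ (Dual ℝ B)) (arens l)) D1 := by
    intro F G
    have hL1 : dualAct (W := Dual ℝ (Dual ℝ A)) (X := Dual ℝ (Dual ℝ B)) ((arens r.flip).flip) (arens (ContinuousLinearMap.mul ℝ A) F G) x
        = dualAct (W := Dual ℝ (Dual ℝ A)) (X := Dual ℝ (Dual ℝ B)) ((arens r.flip).flip) F (dualAct (W := Dual ℝ (Dual ℝ A)) (X := Dual ℝ (Dual ℝ B)) ((arens r.flip).flip) G x) := by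
      ext H
      simp only [dualAct_apply, ContinuousLinearMap.flip_apply]
      rw [hAr F G H]
    have hL2 : dualAct (W := Dual ℝ (Dual ℝ A)) (X := Dual ℝ (Dual ℝ B)) (arens l) (arens (ContinuousLinearMap.mul ℝ A) F G) x
        = dualAct (W := Dual ℝ (Dual ℝ A)) (X := Dual ℝ (Dual ℝ B)) (arens l) G (dualAct (W := Dual ℝ (Dual ℝ A)) (X := Dual ℝ (Dual ℝ B)) (arens l) F x) := by
      ext H
      simp only [dualAct_apply]
      rw [hAl F G H]
    have hL3 : dualAct (W := Dual ℝ (Dual ℝ A)) (X := Dual ℝ (Dual ℝ B)) ((arens r.flip).flip) F (dualAct (W := Dual ℝ (Dual ℝ A)) (X := Dual ℝ (Dual ℝ B)) (arens l) G x)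
        = dualAct (W := Dual ℝ (Dual ℝ A)) (X := Dual ℝ (Dual ℝ B)) (arens l) G (dualAct (W := Dual ℝ (Dual ℝ A)) (X := Dual ℝ (Dual ℝ B)) ((arens r.flip).flip) F x) := by
      ext H
      simp only [dualAct_apply, ContinuousLinearMap.flip_apply]
      rw [hAc F G H]
    simp only [D1_apply]
    rw [hD F G, hL1, hL2]
    simp only [map_sub]
    rw [hL3]
    abel
  have hS : ∀ a b : A, D1 (inclusionInDoubleDual ℝ A (a * b)) = 0 := by
    intro a b
    rw [e_m, hD1der (inclusionInDoubleDual ℝ A a) (inclusionInDoubleDual ℝ A b),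
      hQl a (D1 (inclusionInDoubleDual ℝ A b)) (fun bb => hP b bb),
      hQr b (D1 (inclusionInDoubleDual ℝ A a)) (fun bb => hP a bb), add_zero]
  obtain ⟨ι', Ffil, e, hne, -, htend⟩ := hBLAI
  haveI := hne
  have hT : ∀ a : A, D1 (inclusionInDoubleDual ℝ A a) = 0 := by
    intro a
    have h2 : Filter.Tendsto (fun i => (D1.comp (inclusionInDoubleDual ℝ A)) (e i * a)) Ffil
        (nhds ((D1.comp (inclusionInDoubleDual ℝ A)) a)) :=
      ((D1.comp (inclusionInDoubleDual ℝ A)).continuous.tendsto a).comp (htend a)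
    have h3 : Filter.Tendsto (fun _ : ι' => (0 : Dual ℝ (Dual ℝ (Dual ℝ B)))) Ffil
        (nhds ((D1.comp (inclusionInDoubleDual ℝ A)) a)) := by
      refine h2.congr fun i => ?_
      simpa using hS (e i) a
    have h4 := tendsto_nhds_unique h3 tendsto_const_nhds
    simpa using h4
  have key : ∀ F : Dual ℝ (Dual ℝ A), D1 F = 0 := by
    have key' : ∀ (G : Dual ℝ (Dual ℝ B)), ∀ F : WeakDual ℝ (Dual ℝ A), D1 F G = 0 := by
      intro G
      have hc : Continuous fun F : WeakDual ℝ (Dual ℝ A) => D1 F G := hwcont D1 hD1der G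
      have hclosed : IsClosed {F : WeakDual ℝ (Dual ℝ A) | D1 F G = 0} :=
        isClosed_eq hc continuous_const
      have hsub : Set.range (toWeakBidual A) ⊆ {F : WeakDual ℝ (Dual ℝ A) | D1 F G = 0} := by
        rintro _ ⟨a, rfl⟩
        show D1 (inclusionInDoubleDual ℝ A a) G = 0
        rw [hT a]
        rfl
      intro F
      exact hclosed.closure_subset_iff.mpr hsub ((denseRange_toWeakBidual A) F)
    intro F
    ext G
    exact key' G F
  refine ⟨x, fun F => ?_⟩
  have h0 : D F - (dualAct (W := Dual ℝ (Dual ℝ A)) (X := Dual ℝ (Dual ℝ B)) ((arens r.flip).flip) F x - dualAct (W := Dual ℝ (Dual ℝ A)) (X := Dual ℝ (Dual ℝ B)) (arens l) F x) = 0 := by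
    rw [← D1_apply, key F]
  exact sub_eq_zero.mp h0
end
end
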